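/- Let D = (V,E) be a finite directed graph with root r, and let x ∈ {0,1}^E and f ∈ ℝ≥0^E satisfy: (i) x(δ⁻(v)) ≤ 1 for all v ≠ r; (ii) x(δ⁻(r)) = 0; (iii) f(δ⁻(v)) − f(δ⁺(v)) ≥ x(δ⁻(v)) for all v ≠ r; (iv) f(e) ≤ (|V|−1)·x(e) for all e ∈ E. Then the set of edges R = {e : x(e) = 1}, together with r, forms (as an undirected graph on the vertices it touches plus r) a tree containing r. -/
import Mathlib


variable {V : Type} [Fintype V] [DecidableEq V]

/-- Vertices incident to at least one edge of `R`. -/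
def incVerts (R : Finset (Sym2 V)) : Finset V :=
  Finset.univ.filter (fun v => ∃ e ∈ R, v ∈ e)

/-- Reachability in the undirected graph with edge set `R`. -/
def ReachE (R : Finset (Sym2 V)) (u v : V) : Prop :=
  Relation.ReflTransGen (fun a b => s(a, b) ∈ R) u v

/-- `R` is (the edge set of) a tree containing the vertex `r`: every vertex touched by
`R` is connected to `r`, and the number of edges is one less than the number of
vertices (the touched ones together with `r`). -/
def IsRTree (R : Finset (Sym2 V)) (r : V) : Prop :=
  (∀ v ∈ incVerts R, ReachE R r v) ∧ R.card + 1 = (insert r (incVerts R)).card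

/-- forward direction of Proposition 1: if `x ∈ {0,1}^E` and
`f ∈ ℝ≥0^E` satisfy (i) `x(δ⁻(v)) ≤ 1` for `v ≠ r`, (ii) `x(δ⁻(r)) = 0`,
(iii) `f(δ⁻(v)) − f(δ⁺(v)) ≥ x(δ⁻(v))` for `v ≠ r`, and
(iv) `f(e) ≤ (|V|−1)·x(e)`, then the edges with `x(e) = 1`, viewed as an undirected
graph together with `r`, form a tree containing `r`. -/
theorem stmt11 {V : Type} [Fintype V] [DecidableEq V] (E : Finset (V × V)) (r : V)
    (x f : V × V → ℝ)
    (hx01 : ∀ e ∈ E, x e = 0 ∨ x e = 1) (hf0 : ∀ e ∈ E, 0 ≤ f e)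
    (h1 : ∀ v : V, v ≠ r → ∑ e ∈ E.filter (fun e => e.2 = v), x e ≤ 1)
    (h2 : ∑ e ∈ E.filter (fun e => e.2 = r), x e = 0)
    (h3 : ∀ v : V, v ≠ r →
      (∑ e ∈ E.filter (fun e => e.2 = v), f e) -
        (∑ e ∈ E.filter (fun e => e.1 = v), f e) ≥
      ∑ e ∈ E.filter (fun e => e.2 = v), x e)
    (h4 : ∀ e ∈ E, f e ≤ ((Fintype.card V : ℝ) - 1) * x e) :
    IsRTree ((E.filter (fun e => x e = 1)).image (fun e => s(e.1, e.2))) r := by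

  classical
  set R' : Finset (V × V) := E.filter (fun e => x e = 1) with hR'def
  set R : Finset (Sym2 V) := R'.image (fun e => s(e.1, e.2)) with hRdef
  have hx_nonneg : ∀ e ∈ E, 0 ≤ x e := by
    intro e he; rcases hx01 e he with h | h <;> simp [h]
  have hf_zero : ∀ e ∈ E, x e = 0 → f e = 0 := by
    intro e he hxe
    have h := h4 e he
    rw [hxe, mul_zero] at h
    linarith [hf0 e he]
  have hhead_ne_r : ∀ e ∈ E, x e = 1 → e.2 ≠ r := by
    intro e he hxe hc
    have hmem : e ∈ E.filter (fun e => e.2 = r) := Finset.mem_filter.mpr ⟨he, hc⟩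
    have h := Finset.single_le_sum (f := x)
      (fun i hi => hx_nonneg i (Finset.mem_filter.mp hi).1) hmem
    rw [hxe, h2] at h
    linarith
  have huniq : ∀ e ∈ E, x e = 1 → ∀ e' ∈ E, e'.2 = e.2 → e' ≠ e → x e' = 0 := by
    intro e he hxe e' he' hsnd hne
    by_contra hne0
    have hx1 : x e' = 1 := (hx01 e' he').resolve_left hne0
    have hsub : ({e', e} : Finset (V × V)) ⊆ E.filter (fun z => z.2 = e.2) := by
      intro z hz
      rcases Finset.mem_insert.mp hz with rfl | hz
      · exact Finset.mem_filter.mpr ⟨he', hsnd⟩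
      · rw [Finset.mem_singleton] at hz; subst hz
        exact Finset.mem_filter.mpr ⟨he, rfl⟩
    have hpair : ∑ z ∈ ({e', e} : Finset (V × V)), x z = 2 := by
      rw [Finset.sum_pair hne, hx1, hxe]; norm_num
    have hle : ∑ z ∈ ({e', e} : Finset (V × V)), x z ≤
        ∑ z ∈ E.filter (fun z => z.2 = e.2), x z :=
      Finset.sum_le_sum_of_subset_of_nonneg hsub
        (fun i hi _ => hx_nonneg i (Finset.mem_filter.mp hi).1)
    have h := h1 e.2 (hhead_ne_r e he hxe)
    rw [hpair] at hle
    linarith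
  have hfdin : ∀ (v : V), ∀ e ∈ E, x e = 1 → e.2 = v →
      ∑ e' ∈ E.filter (fun e' => e'.2 = v), f e' = f e := by
    intro v e he hxe hv
    have hmem : e ∈ E.filter (fun e' : V × V => e'.2 = v) := Finset.mem_filter.mpr ⟨he, hv⟩
    refine Finset.sum_eq_single_of_mem e hmem ?_
    intro e' he' hne
    obtain ⟨he'E, hsnd⟩ := Finset.mem_filter.mp he'
    exact hf_zero e' he'E (huniq e he hxe e' he'E (by rw [hsnd, hv]) hne)
  have hxdin : ∀ (v : V), ∀ e ∈ E, x e = 1 → e.2 = v →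
      (1 : ℝ) ≤ ∑ e' ∈ E.filter (fun e' => e'.2 = v), x e' := by
    intro v e he hxe hv
    have hmem : e ∈ E.filter (fun e' : V × V => e'.2 = v) := Finset.mem_filter.mpr ⟨he, hv⟩
    have h := Finset.single_le_sum (f := x)
      (fun i hi => hx_nonneg i (Finset.mem_filter.mp hi).1) hmem
    rw [hxe] at h
    exact h
  have hdout_nonneg : ∀ v : V, 0 ≤ ∑ e' ∈ E.filter (fun e' => e'.1 = v), f e' :=
    fun v => Finset.sum_nonneg (fun i hi => hf0 i (Finset.mem_filter.mp hi).1)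
  have hL : ∀ e ∈ E, x e = 1 →
      1 + ∑ e' ∈ E.filter (fun e' => e'.1 = e.2), f e' ≤ f e := by
    intro e he hxe
    have h3' := h3 e.2 (hhead_ne_r e he hxe)
    rw [hfdin e.2 e he hxe rfl] at h3'
    have hx := hxdin e.2 e he hxe rfl
    linarith
  have hfe1 : ∀ e ∈ E, x e = 1 → 1 ≤ f e := by
    intro e he hxe
    have := hL e he hxe
    have := hdout_nonneg e.2
    linarith
  have hparent : ∀ e ∈ E, x e = 1 → e.1 ≠ r →
      ∃ e' ∈ E, x e' = 1 ∧ e'.2 = e.1 ∧ 1 + f e ≤ f e' := by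
    intro e he hxe hvr
    have hdoutv : f e ≤ ∑ e' ∈ E.filter (fun e' => e'.1 = e.1), f e' :=
      Finset.single_le_sum (f := f)
        (fun i hi => hf0 i (Finset.mem_filter.mp hi).1)
        (Finset.mem_filter.mpr ⟨he, rfl⟩)
    have h3' := h3 e.1 hvr
    have hxdinv : 0 ≤ ∑ e' ∈ E.filter (fun e' => e'.2 = e.1), x e' :=
      Finset.sum_nonneg (fun i hi => hx_nonneg i (Finset.mem_filter.mp hi).1)
    have hfe := hfe1 e he hxe
    have hpos : 0 < ∑ e' ∈ E.filter (fun e' => e'.2 = e.1), f e' := by linarith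
    obtain ⟨e', he', hfe'⟩ : ∃ e' ∈ E.filter (fun e' => e'.2 = e.1), 0 < f e' := by
      by_contra hc
      push_neg at hc
      have : ∑ e' ∈ E.filter (fun e' => e'.2 = e.1), f e' ≤ 0 :=
        Finset.sum_nonpos hc
      linarith
    obtain ⟨he'E, he'2⟩ := Finset.mem_filter.mp he'
    have hx1 : x e' = 1 := by
      rcases hx01 e' he'E with h | h
      · exfalso; have := hf_zero e' he'E h; linarith
      · exact h
    refine ⟨e', he'E, hx1, he'2, ?_⟩
    have hsum := hfdin e.1 e' he'E hx1 he'2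
    have hx1din := hxdin e.1 e' he'E hx1 he'2
    linarith
  have hmemR : ∀ e ∈ E, x e = 1 → s(e.1, e.2) ∈ R :=
    fun e he hxe => Finset.mem_image_of_mem _ (Finset.mem_filter.mpr ⟨he, hxe⟩)
  have hreach : ∀ k : ℕ, ∀ e ∈ E, x e = 1 →
      (Fintype.card V : ℝ) - k ≤ f e → ReachE R r e.2 := by
    intro k
    induction k with
    | zero =>
      intro e he hxe hfe
      exfalso
      have h := h4 e he
      rw [hxe, mul_one] at h
      simp only [Nat.cast_zero, sub_zero] at hfe
      linarith
    | succ k ih =>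
      intro e he hxe hfe
      by_cases hr : e.1 = r
      · exact Relation.ReflTransGen.single (by rw [← hr]; exact hmemR e he hxe)
      · obtain ⟨e', he'E, hx', h2', hf'⟩ := hparent e he hxe hr
        have hrec : ReachE R r e'.2 := by
          apply ih e' he'E hx'
          push_cast at hfe ⊢
          linarith
        rw [h2'] at hrec
        exact Relation.ReflTransGen.tail hrec (hmemR e he hxe)
  have hreach0 : ∀ e ∈ E, x e = 1 → ReachE R r e.2 := by
    intro e he hxe
    apply hreach (Fintype.card V) e he hxe
    have := hf0 e he
    linarith
  have hconn : ∀ v ∈ incVerts R, ReachE R r v := by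
    intro v hv
    rw [incVerts, Finset.mem_filter] at hv
    obtain ⟨-, e2, he2R, hve⟩ := hv
    rw [hRdef, Finset.mem_image] at he2R
    obtain ⟨e, heR', rfl⟩ := he2R
    obtain ⟨heE, hxe⟩ := Finset.mem_filter.mp heR'
    rw [Sym2.mem_iff] at hve
    rcases hve with rfl | rfl
    · by_cases hr : e.1 = r
      · rw [← hr]
        exact Relation.ReflTransGen.refl
      · obtain ⟨e', he'E, hx', h2', -⟩ := hparent e heE hxe hr
        have := hreach0 e' he'E hx'
        rwa [h2'] at this
    · exact hreach0 e heE hxe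
  have hinj2 : Set.InjOn (fun e : V × V => s(e.1, e.2)) R' := by
    intro a ha b hb hab
    obtain ⟨haE, hxa⟩ := Finset.mem_filter.mp ha
    obtain ⟨hbE, hxb⟩ := Finset.mem_filter.mp hb
    rw [show (fun e : V × V => s(e.1, e.2)) a = s(a.1, a.2) from rfl,
      show (fun e : V × V => s(e.1, e.2)) b = s(b.1, b.2) from rfl, Sym2.eq_iff] at hab
    rcases hab with ⟨h1', h2'⟩ | ⟨h1', h2'⟩
    · exact Prod.ext h1' h2'
    · exfalso
      have hLa := hL a haE hxa
      have hLb := hL b hbE hxb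
      have hba : f b ≤ ∑ e' ∈ E.filter (fun e' => e'.1 = a.2), f e' :=
        Finset.single_le_sum (f := f)
          (fun i hi => hf0 i (Finset.mem_filter.mp hi).1)
          (Finset.mem_filter.mpr ⟨hbE, h2'.symm⟩)
      have hab' : f a ≤ ∑ e' ∈ E.filter (fun e' => e'.1 = b.2), f e' :=
        Finset.single_le_sum (f := f)
          (fun i hi => hf0 i (Finset.mem_filter.mp hi).1)
          (Finset.mem_filter.mpr ⟨haE, h1'⟩)
      linarith
  have hcardR : R.card = R'.card := Finset.card_image_of_injOn hinj2
  set H : Finset V := R'.image (fun e => e.2) with hHdef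
  have hHcard : H.card = R'.card := by
    apply Finset.card_image_of_injOn
    intro a ha b hb hab
    obtain ⟨haE, hxa⟩ := Finset.mem_filter.mp ha
    obtain ⟨hbE, hxb⟩ := Finset.mem_filter.mp hb
    by_contra hne
    have hab' : b.2 = a.2 := (show a.2 = b.2 from hab).symm
    have h0 := huniq a haE hxa b hbE hab' (Ne.symm hne)
    rw [h0] at hxb
    norm_num at hxb
  have hrH : r ∉ H := by
    rw [hHdef]
    simp only [Finset.mem_image, not_exists]
    rintro e ⟨heR', hre⟩
    obtain ⟨heE, hxe⟩ := Finset.mem_filter.mp heR'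
    exact hhead_ne_r e heE hxe hre
  have hset : insert r (incVerts R) = insert r H := by
    ext v
    simp only [Finset.mem_insert]
    constructor
    · rintro (rfl | hv)
      · exact Or.inl rfl
      · rw [incVerts, Finset.mem_filter] at hv
        obtain ⟨-, e2, he2R, hve⟩ := hv
        rw [hRdef, Finset.mem_image] at he2R
        obtain ⟨e, heR', rfl⟩ := he2R
        obtain ⟨heE, hxe⟩ := Finset.mem_filter.mp heR'
        rw [Sym2.mem_iff] at hve
        rcases hve with rfl | rfl
        · by_cases hr : e.1 = r
          · exact Or.inl hr
          · obtain ⟨e', he'E, hx', h2', -⟩ := hparent e heE hxe hr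
            exact Or.inr (Finset.mem_image.mpr ⟨e', Finset.mem_filter.mpr ⟨he'E, hx'⟩, h2'⟩)
        · exact Or.inr (Finset.mem_image.mpr ⟨e, heR', rfl⟩)
    · rintro (rfl | hv)
      · exact Or.inl rfl
      · rw [hHdef, Finset.mem_image] at hv
        obtain ⟨e, heR', rfl⟩ := hv
        refine Or.inr ?_
        rw [incVerts, Finset.mem_filter]
        obtain ⟨heE, hxe⟩ := Finset.mem_filter.mp heR'
        exact ⟨Finset.mem_univ _, s(e.1, e.2), hmemR e heE hxe, Sym2.mem_mk_right _ _⟩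
  refine ⟨hconn, ?_⟩
  rw [hset, Finset.card_insert_of_notMem hrH, hcardR, hHcard]
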